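/- For every row-finite quiver E, the graph monoid M(E) is separative. -/

import Mathlib

/-- The algebraic preorder on a commutative monoid: `x ≤ y` iff `∃ z, y = x + z`. -/
def AlgLE {M : Type*} [AddCommMonoid M] (x y : M) : Prop := ∃ z, y = x + z

/-- A monoid is conical if `x + y = 0` implies `x = 0` and `y = 0`. -/
def IsConical (M : Type*) [AddCommMonoid M] : Prop := ∀ x y : M, x + y = 0 → x = 0 ∧ y = 0

/-- A refinement monoid: every equality `a + b = c + d` admits a refinement. -/
def IsRefinement (M : Type*) [AddCommMonoid M] : Prop :=
  ∀ a b c d : M, a + b = c + d →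
    ∃ x y z w : M, a = x + y ∧ b = z + w ∧ c = x + z ∧ d = y + w

/-- Separative: `a + a = a + b` and `b + b = a + b` imply `a = b`. -/
def IsSeparative (M : Type*) [AddCommMonoid M] : Prop :=
  ∀ a b : M, a + a = a + b → b + b = a + b → a = b

/-- A prime element: `p ≠ 0` and `p ≤ a + b` implies `p ≤ a` or `p ≤ b`
(algebraic preorder). -/
def IsPrimeElem {M : Type*} [AddCommMonoid M] (p : M) : Prop :=
  p ≠ 0 ∧ ∀ a b : M, AlgLE p (a + b) → AlgLE p a ∨ AlgLE p b

/-- Primely generated: every element is a finite sum of prime elements. -/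
def PrimelyGenerated (M : Type*) [AddCommMonoid M] : Prop :=
  ∀ x : M, ∃ l : Multiset M, (∀ p ∈ l, IsPrimeElem p) ∧ x = l.sum

/-- Antisymmetric: the algebraic preorder is a partial order. -/
def IsAntisymmetric (M : Type*) [AddCommMonoid M] : Prop :=
  ∀ x y : M, AlgLE x y → AlgLE y x → x = y

/-- A primitive monoid: an antisymmetric, primely generated refinement monoid. -/
def IsPrimitive (M : Type*) [AddCommMonoid M] : Prop :=
  IsAntisymmetric M ∧ PrimelyGenerated M ∧ IsRefinement M

/-- A row-finite quiver: vertex set `V`, edge set `E`, source and range maps,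
with each vertex emitting only finitely many edges. -/
structure RowFiniteQuiver where
  V : Type
  E : Type
  s : E → V
  r : E → V
  rowFinite : ∀ v : V, {e : E | s e = v}.Finite

/-- The defining relations of the graph monoid: each vertex `v` emitting at least
one edge is identified with `Σ_{s(e) = v} r(e)`.  (The free commutative monoid on
`V` is the monoid `Multiset V`.) -/
def graphRel (Q : RowFiniteQuiver) : Multiset Q.V → Multiset Q.V → Prop :=
  fun x y => ∃ v : Q.V, (∃ e : Q.E, Q.s e = v) ∧ x = {v} ∧
    y = (Q.rowFinite v).toFinset.val.map Q.r

/-- The graph monoid `M(E)`: quotient of the free commutative monoid on the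
vertices by the smallest monoid congruence containing the graph relations. -/
abbrev GraphMonoid (Q : RowFiniteQuiver) := (addConGen (graphRel Q)).Quotient

namespace GraphSep


open Relation

variable {V : Type}

/-- One-step rewriting for a replacement system `ρ`. -/
def RStep (ρ : V → Option (Multiset V)) (x y : Multiset V) : Prop :=
  ∃ v R m, ρ v = some R ∧ x = v ::ₘ m ∧ y = m + R

abbrev RT (ρ : V → Option (Multiset V)) : Multiset V → Multiset V → Prop :=
  Relation.ReflTransGen (RStep ρ)

variable {ρ : V → Option (Multiset V)}

lemma RStep.addRight {x y : Multiset V} (h : RStep ρ x y) (j : Multiset V) :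
    RStep ρ (x + j) (y + j) := by
  obtain ⟨v, R, m, hv, hx, hy⟩ := h
  exact ⟨v, R, m + j, hv, by simp [hx, Multiset.cons_add], by
    simp [hy]; rw [add_right_comm]⟩

lemma RT.addRight {x y : Multiset V} (h : RT ρ x y) (j : Multiset V) :
    RT ρ (x + j) (y + j) := by
  induction h with
  | refl => exact ReflTransGen.refl
  | tail _ hs ih => exact ih.tail (hs.addRight j)

lemma RT.add {x y u w : Multiset V} (h : RT ρ x y) (h' : RT ρ u w) :
    RT ρ (x + u) (y + w) := by
  refine (h.addRight u).trans ?_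
  rw [add_comm y u, add_comm y w]
  exact h'.addRight y

lemma diamond : ∀ a b c : Multiset V, RStep ρ a b → RStep ρ a c →
    ∃ d, ReflGen (RStep ρ) b d ∧ ReflTransGen (RStep ρ) c d := by
  rintro a b c ⟨v, R, m, hv, rfl, rfl⟩ ⟨v', R', m', hv', he, rfl⟩
  rcases Multiset.cons_eq_cons.1 he with ⟨rfl, rfl⟩ | ⟨hne, u, rfl, rfl⟩
  · rw [hv] at hv'; cases hv'
    exact ⟨m + R, ReflGen.refl, ReflTransGen.refl⟩
  · refine ⟨u + R + R', ReflGen.single ?_, ReflTransGen.single ?_⟩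
    · exact ⟨v', R', u + R, hv', by rw [Multiset.cons_add], by rw [add_right_comm]⟩
    · exact ⟨v, R, u + R', hv, by rw [Multiset.cons_add], by rw [add_right_comm]⟩

lemma equivalence_joinRT : Equivalence (Join (RT ρ)) :=
  Relation.equivalence_join_reflTransGen diamond

/-- The congruence on the free commutative monoid generated by a replacement system. -/
def JoinCon (ρ : V → Option (Multiset V)) : AddCon (Multiset V) where
  r := Join (RT ρ)
  iseqv := equivalence_joinRT
  add' := by
    rintro w x y z ⟨c, hw, hx⟩ ⟨d, hy, hz⟩
    exact ⟨c + d, hw.add hy, hx.add hz⟩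

lemma joinCon_iff {x y : Multiset V} : JoinCon ρ x y ↔ ∃ c, RT ρ x c ∧ RT ρ y c := Iff.rfl

/-- Decomposition of reductions from a sum. -/
lemma RT.decompose {a b c : Multiset V} (h : RT ρ (a + b) c) :
    ∃ a' b', RT ρ a a' ∧ RT ρ b b' ∧ c = a' + b' := by
  induction h with
  | refl => exact ⟨a, b, ReflTransGen.refl, ReflTransGen.refl, rfl⟩
  | tail _ hs ih =>
    obtain ⟨a', b', ha, hb, rfl⟩ := ih
    obtain ⟨v, R, m, hv, he, rfl⟩ := hs
    have hvm : v ∈ a' + b' := by rw [he]; exact Multiset.mem_cons_self _ _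
    rcases Multiset.mem_add.1 hvm with hva | hvb
    · obtain ⟨t, rfl⟩ := Multiset.exists_cons_of_mem hva
      rw [Multiset.cons_add] at he
      have hm := (Multiset.cons_inj_right v).1 he.symm
      refine ⟨t + R, b', ha.tail ⟨v, R, t, hv, rfl, rfl⟩, hb, ?_⟩
      rw [hm, add_right_comm]
    · obtain ⟨t, rfl⟩ := Multiset.exists_cons_of_mem hvb
      rw [add_comm a' (v ::ₘ t), Multiset.cons_add] at he
      have hm := (Multiset.cons_inj_right v).1 he.symm
      refine ⟨a', t + R, ha, hb.tail ⟨v, R, t, hv, rfl, rfl⟩, ?_⟩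
      rw [hm, add_comm t a', add_assoc]

/-- Refinement in the free commutative monoid (multisets). -/
lemma multiset_refine {a b c d : Multiset V} (h : a + b = c + d) :
    ∃ x y z w : Multiset V, a = x + y ∧ b = z + w ∧ c = x + z ∧ d = y + w := by
  classical
  refine ⟨a ∩ c, a - c, c - a, b - (c - a), ?_, ?_, ?_, ?_⟩ <;>
  · ext e
    have hc := congrArg (Multiset.count e) h
    simp only [Multiset.count_add] at hc
    simp [Multiset.count_add, Multiset.count_sub, Multiset.count_inter]
    omega




open Relation

variable {V : Type} {ρ : V → Option (Multiset V)}

lemma joinCon_of_rt {x y : Multiset V} (h : RT ρ x y) : JoinCon ρ x y :=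
  ⟨y, h, ReflTransGen.refl⟩

lemma coe_eq_of_rt {x y : Multiset V} (h : RT ρ x y) :
    ((x : (JoinCon ρ).Quotient)) = (y : (JoinCon ρ).Quotient) :=
  (AddCon.eq _).2 (joinCon_of_rt h)

lemma refinement_joinCon : IsRefinement (JoinCon ρ).Quotient := by
  intro a b c d h
  induction a using AddCon.induction_on with | H a =>
  induction b using AddCon.induction_on with | H b =>
  induction c using AddCon.induction_on with | H c =>
  induction d using AddCon.induction_on with | H d =>
  rw [← AddCon.coe_add, ← AddCon.coe_add, AddCon.eq] at h
  obtain ⟨e, h1, h2⟩ := h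
  obtain ⟨a', b', ha, hb, rfl⟩ := h1.decompose
  obtain ⟨c', d', hc, hd, he⟩ := h2.decompose
  obtain ⟨x, y, z, w, hxy, hzw, hxz, hyw⟩ := multiset_refine he
  refine ⟨x, y, z, w, ?_, ?_, ?_, ?_⟩
  · rw [← AddCon.coe_add, coe_eq_of_rt ha, hxy]
  · rw [← AddCon.coe_add, coe_eq_of_rt hb, hzw]
  · rw [← AddCon.coe_add, coe_eq_of_rt hc, hxz]
  · rw [← AddCon.coe_add, coe_eq_of_rt hd, hyw]

lemma algLE_coe_iff {a b : Multiset V} :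
    AlgLE (a : (JoinCon ρ).Quotient) (b : (JoinCon ρ).Quotient) ↔
      ∃ a' e, RT ρ a a' ∧ RT ρ b e ∧ a' ≤ e := by
  constructor
  · rintro ⟨z, hz⟩
    induction z using AddCon.induction_on with | H d =>
    rw [← AddCon.coe_add, AddCon.eq] at hz
    obtain ⟨e, h1, h2⟩ := hz
    obtain ⟨a', d', ha, hd, rfl⟩ := h2.decompose
    exact ⟨a', a' + d', ha, h1, Multiset.le_add_right _ _⟩
  · rintro ⟨a', e, ha, hb, hle⟩
    classical
    refine ⟨((e - a' : Multiset V) : (JoinCon ρ).Quotient), ?_⟩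
    rw [← AddCon.coe_add, AddCon.eq]
    have h2 : a' + (e - a') = e := by rw [add_comm]; exact tsub_add_cancel_of_le hle
    refine ⟨e, hb, ?_⟩
    have h3 := ha.addRight (e - a')
    rwa [h2] at h3

/-- Every element below a class `π n` has a representative whose reductions stay
in the "cone" of `n`. -/
lemma exists_rep_of_le {n : Multiset V} {x : (JoinCon ρ).Quotient}
    (h : AlgLE x (n : (JoinCon ρ).Quotient)) :
    ∃ m e : Multiset V, (x = (m : (JoinCon ρ).Quotient)) ∧ RT ρ n e ∧ m ≤ e := by
  induction x using AddCon.induction_on with | H a =>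
  obtain ⟨a', e, _, hn, hle⟩ := algLE_coe_iff.1 h
  exact ⟨a', e, (coe_eq_of_rt ‹RT ρ a a'›), hn, hle⟩


variable {M : Type*} [AddCommMonoid M]


variable {M : Type*} [AddCommMonoid M]

lemma prime_le_of_eq_add {p x y : M} (hp : IsPrimeElem p) (h : p = x + y) :
    AlgLE p x ∨ AlgLE p y :=
  hp.2 x y ⟨0, by rw [add_zero, h]⟩

/-- The key cancellation lemma: a prime can be cancelled from `p + a = p + b`
provided `p ≤ a` and `p ≤ b`. -/
lemma prime_cancel (hr : IsRefinement M) {p a b : M}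
    (hp : IsPrimeElem p) (h : p + a = p + b) (hpa : AlgLE p a) (hpb : AlgLE p b) :
    a = b := by
  obtain ⟨x, y, z, w, hP1, hA, hP2, hB⟩ := hr p a p b h
  -- hP1 : p = x + y, hA : a = z + w, hP2 : p = x + z, hB : b = y + w
  have caseB : AlgLE p x → a = b := by
    rintro ⟨x', hx'⟩
    have I : p = (p + x') + y := by rw [hx'] at hP1; exact hP1
    have II : p = (p + x') + z := by rw [hx'] at hP2; exact hP2
    have III : p + y = p + z := by
      calc p + y = ((p + x') + z) + y := by rw [← II]
        _ = ((p + x') + y) + z := by abel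
        _ = p + z := by rw [← I]
    have hpzw : AlgLE p (z + w) := by rw [← hA]; exact hpa
    have hpyw : AlgLE p (y + w) := by rw [← hB]; exact hpb
    have casew : AlgLE p w → a = b := by
      rintro ⟨w₀, hw₀⟩
      calc a = z + w := hA
        _ = z + (p + w₀) := by rw [hw₀]
        _ = (p + z) + w₀ := by abel
        _ = (p + y) + w₀ := by rw [← III]
        _ = y + (p + w₀) := by abel
        _ = y + w := by rw [← hw₀]
        _ = b := hB.symm
    rcases hp.2 z w hpzw with hz | hw
    · rcases hp.2 y w hpyw with hy2 | hw
      · obtain ⟨z₀, hz₀⟩ := hz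
        obtain ⟨y₀, hy₀⟩ := hy2
        have IV : p + (p + y₀) = p + (p + z₀) := by rw [← hy₀, ← hz₀]; exact III
        have V := hP2
        rw [hx', hz₀] at V
        -- V : p = (p + x') + (p + z₀)
        calc a = z + w := hA
          _ = (p + z₀) + w := by rw [hz₀]
          _ = ((p + x') + (p + z₀)) + (z₀ + w) := by rw [← V]; abel
          _ = (p + (p + z₀)) + (x' + (z₀ + w)) := by abel
          _ = (p + (p + y₀)) + (x' + (z₀ + w)) := by rw [IV]
          _ = ((p + x') + (p + z₀)) + (y₀ + w) := by abel
          _ = p + (y₀ + w) := by rw [← V]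
          _ = (p + y₀) + w := by abel
          _ = y + w := by rw [← hy₀]
          _ = b := hB.symm
      · exact casew hw
    · exact casew hw
  rcases prime_le_of_eq_add hp hP1 with hx | hy
  · exact caseB hx
  · rcases prime_le_of_eq_add hp hP2 with hx | hz
    · exact caseB hx
    · -- CASE A : p ≤ y and p ≤ z
      obtain ⟨y', hy'⟩ := hy
      obtain ⟨z', hz'⟩ := hz
      have I : p = x + (p + y') := by rw [hy'] at hP1; exact hP1
      have II : p = x + (p + z') := by rw [hz'] at hP2; exact hP2
      calc a = z + w := hA
        _ = (p + z') + w := by rw [hz']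
        _ = p + (z' + w) := by abel
        _ = (x + (p + y')) + (z' + w) := by rw [← I]
        _ = (x + (p + z')) + (y' + w) := by abel
        _ = p + (y' + w) := by rw [← II]
        _ = (p + y') + w := by abel
        _ = y + w := by rw [← hy']
        _ = b := hB.symm

lemma algLE_trans {x y z : M} (h1 : AlgLE x y) (h2 : AlgLE y z) : AlgLE x z := by
  obtain ⟨u, rfl⟩ := h1; obtain ⟨v, rfl⟩ := h2; exact ⟨u + v, add_assoc x u v⟩

lemma sep_multiset (hr : IsRefinement M) :
    ∀ (l : Multiset M) (a b : M),
      (∀ p ∈ l, IsPrimeElem p ∧ AlgLE p a ∧ AlgLE p b) →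
      a + l.sum = b + l.sum → a = b := by
  intro l
  induction l using Multiset.induction with
  | empty => intro a b _ h; simpa using h
  | cons p l ih =>
    intro a b hl h
    obtain ⟨hp, ⟨za, hza⟩, ⟨zb, hzb⟩⟩ := hl p (Multiset.mem_cons_self p l)
    have h' : p + (a + l.sum) = p + (b + l.sum) := by
      rw [Multiset.sum_cons] at h
      calc p + (a + l.sum) = a + (p + l.sum) := by abel
        _ = b + (p + l.sum) := h
        _ = p + (b + l.sum) := by abel
    have ha' : AlgLE p (a + l.sum) := ⟨za + l.sum, by rw [hza]; abel⟩
    have hb' : AlgLE p (b + l.sum) := ⟨zb + l.sum, by rw [hzb]; abel⟩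
    have := prime_cancel hr hp h' ha' hb'
    exact ih a b (fun q hq => hl q (Multiset.mem_cons_of_mem hq)) this

theorem separative_of_pg (hr : IsRefinement M) (hpg : PrimelyGenerated M) :
    IsSeparative M := by
  intro a b h1 h2
  obtain ⟨l, hl, hs⟩ := hpg a
  refine sep_multiset hr l a b ?_ ?_
  · intro p hp
    have hpa : AlgLE p a := by
      obtain ⟨t, rfl⟩ := Multiset.exists_cons_of_mem hp
      exact ⟨t.sum, by rw [hs, Multiset.sum_cons]⟩
    refine ⟨hl p hp, hpa, ?_⟩
    have : AlgLE p (b + b) := by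
      obtain ⟨c, hc⟩ := hpa
      exact ⟨c + b, by rw [h2, hc]; abel⟩
    rcases (hl p hp).2 b b this with h | h <;> exact h
  · rw [← hs]
    calc a + a = a + b := h1
      _ = b + a := add_comm a b



open Relation

variable {V : Type} {ρ : V → Option (Multiset V)}

/-- The "cone" of a multiset: its support together with all replacement supports. -/
def Cone (ρ : V → Option (Multiset V)) (n : Multiset V) : Set V :=
  {u | u ∈ n} ∪ {u | ∃ v R, ρ v = some R ∧ u ∈ R}

lemma cone_finite (hdom : {v | (ρ v).isSome}.Finite) (n : Multiset V) :
    (Cone ρ n).Finite := by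
  apply Set.Finite.union (Multiset.finite_toSet n)
  have : {u | ∃ v R, ρ v = some R ∧ u ∈ R} ⊆
      ⋃ v ∈ {v | (ρ v).isSome}, {u | ∃ R, ρ v = some R ∧ u ∈ R} := by
    rintro u ⟨v, R, hv, hu⟩
    exact Set.mem_biUnion (by simp [hv]) ⟨R, hv, hu⟩
  refine Set.Finite.subset (Set.Finite.biUnion hdom ?_) this
  intro v hv
  rcases Option.isSome_iff_exists.1 hv with ⟨R, hR⟩
  apply Set.Finite.subset (Multiset.finite_toSet R)
  rintro u ⟨R', hR', hu⟩
  rw [hR] at hR'; cases hR'; exact hu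

lemma rt_cone {n k k' : Multiset V} (hk : ∀ u ∈ k, u ∈ Cone ρ n) (h : RT ρ k k') :
    ∀ u ∈ k', u ∈ Cone ρ n := by
  induction h with
  | refl => exact hk
  | tail _ hs ih =>
    obtain ⟨v, R, m, hv, rfl, rfl⟩ := hs
    intro u hu
    rcases Multiset.mem_add.1 hu with hm | hR
    · exact ih u (Multiset.mem_cons_of_mem hm)
    · exact Or.inr ⟨v, R, hv, hR⟩

lemma self_cone (n : Multiset V) : ∀ u ∈ n, u ∈ Cone ρ n := fun u hu => Or.inl hu

/-- Strict algebraic inequality. -/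
def AlgLT {M : Type*} [AddCommMonoid M] (x y : M) : Prop := AlgLE x y ∧ ¬ AlgLE y x

lemma wf_algLT (hdom : {v | (ρ v).isSome}.Finite) :
    WellFounded (AlgLT (M := (JoinCon ρ).Quotient)) := by
  classical
  by_contra hwf
  -- extract an infinite strictly descending sequence
  have hex : ∃ a : (JoinCon ρ).Quotient, ¬ Acc AlgLT a := by
    by_contra h; push_neg at h; exact hwf ⟨h⟩
  obtain ⟨a, ha⟩ := hex
  have key : ∀ x : (JoinCon ρ).Quotient, ¬ Acc AlgLT x → ∃ y, AlgLT y x ∧ ¬ Acc AlgLT y := by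
    intro x hx
    by_contra h; push_neg at h
    exact hx (Acc.intro x fun y hy => h y hy)
  let f : ℕ → {x : (JoinCon ρ).Quotient // ¬ Acc AlgLT x} :=
    fun n => Nat.rec ⟨a, ha⟩ (fun _ p => ⟨(key p.1 p.2).choose, ((key p.1 p.2).choose_spec).2⟩) n
  have hdesc : ∀ n, AlgLT (f (n + 1)).1 (f n).1 := fun n => ((key (f n).1 (f n).2).choose_spec).1
  have hchain : ∀ m n, m ≤ n → AlgLE (f n).1 (f m).1 := by
    intro m n hmn
    induction n with
    | zero => cases Nat.le_zero.1 hmn; exact ⟨0, (add_zero _).symm⟩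
    | succ k ih =>
      rcases Nat.lt_or_ge m (k+1) with h | h
      · exact algLE_trans (hdesc k).1 (ih (Nat.lt_succ_iff.1 h))
      · have : m = k + 1 := le_antisymm hmn h
        subst this; exact ⟨0, (add_zero _).symm⟩
  -- representatives
  obtain ⟨n₀, hn₀⟩ := Quotient.exists_rep (f 0).1
  have hn₀' : ((n₀ : Multiset V) : (JoinCon ρ).Quotient) = (f 0).1 := hn₀
  have hrep : ∀ n : ℕ, ∃ m : Multiset V,
      ((m : (JoinCon ρ).Quotient) = (f (n+1)).1) ∧ ∀ u ∈ m, u ∈ Cone ρ n₀ := by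
    intro n
    have hle : AlgLE (f (n+1)).1 ((n₀ : Multiset V) : (JoinCon ρ).Quotient) := by
      rw [hn₀']; exact hchain 0 (n+1) (Nat.zero_le _)
    obtain ⟨m, e, hm, hrt, hmle⟩ := exists_rep_of_le hle
    exact ⟨m, hm.symm, fun u hu => rt_cone (self_cone n₀) hrt u (Multiset.mem_of_le hmle hu)⟩
  choose g hg hgc using hrep
  -- Dickson's lemma
  set T : Finset V := (cone_finite hdom n₀).toFinset with hT
  have hfin : Finite ↥(T : Set V) := by infer_instance
  haveI : IsWellOrder ℕ (· < ·) := inferInstance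
  let h : ℕ → (↥(T : Set V) → ℕ) := fun n t => (g n).count t.1
  obtain ⟨i, j, hij, hle⟩ := (Set.isPWO_of_wellQuasiOrderedLE (Set.univ : Set (↥(T : Set V) → ℕ))).exists_lt (f := h)
    (fun n => Set.mem_univ _)
  have hgle : g i ≤ g j := by
    rw [Multiset.le_iff_count]
    intro u
    by_cases hu : u ∈ Cone ρ n₀
    · have hu' : u ∈ (T : Set V) := by simp [hT, hu]
      exact hle ⟨u, hu'⟩
    · have : u ∉ g i := fun hmem => hu (hgc i u hmem)
      simp [Multiset.count_eq_zero_of_notMem this]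
  have h1 : AlgLE (f (i+1)).1 (f (j+1)).1 := by
    rw [← hg i, ← hg j]
    exact ⟨((g j - g i : Multiset V) : (JoinCon ρ).Quotient), by
      rw [← AddCon.coe_add, add_tsub_cancel_of_le hgle]⟩
  have h2 : AlgLE (f j).1 (f (i+1)).1 := hchain (i+1) j hij
  exact (hdesc j).2 (algLE_trans h2 h1)

theorem pg_joinCon (hdom : {v | (ρ v).isSome}.Finite) :
    PrimelyGenerated (JoinCon ρ).Quotient := by
  classical
  intro x
  induction x using (wf_algLT hdom).induction with
  | _ x ih =>
    by_cases h0 : x = 0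
    · exact ⟨0, by simp, by simp [h0]⟩
    by_cases hp : IsPrimeElem x
    · exact ⟨{x}, by simpa using hp, by simp⟩
    · rw [IsPrimeElem, not_and_or] at hp
      rcases hp with hp | hp
      · exact absurd (not_not.1 hp) h0
      push_neg at hp
      obtain ⟨u, v, huv, hxu, hxv⟩ := hp
      obtain ⟨c, hc⟩ := huv
      obtain ⟨α, β, γ, δ, hu, hv, hx, hcd⟩ := refinement_joinCon u v x c hc
      have hα : AlgLT α x := by
        refine ⟨⟨γ, hx⟩, fun hle => hxu ?_⟩
        exact algLE_trans hle ⟨β, hu⟩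
      have hγ : AlgLT γ x := by
        refine ⟨⟨α, by rw [hx, add_comm]⟩, fun hle => hxv ?_⟩
        exact algLE_trans hle ⟨δ, hv⟩
      obtain ⟨l₁, hl₁, hs₁⟩ := ih α hα
      obtain ⟨l₂, hl₂, hs₂⟩ := ih γ hγ
      refine ⟨l₁ + l₂, ?_, ?_⟩
      · intro p hpm
        rcases Multiset.mem_add.1 hpm with h | h
        · exact hl₁ p h
        · exact hl₂ p h
      · rw [hx, hs₁, hs₂, Multiset.sum_add]


/-! ### Restriction to a finite subsystem -/

open scoped Classical in
noncomputable def restr (ρ : V → Option (Multiset V)) (W : Finset V) :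
    V → Option (Multiset V) :=
  fun v => if v ∈ W then ρ v else none

lemma restr_dom (ρ : V → Option (Multiset V)) (W : Finset V) :
    {v | (restr ρ W v).isSome}.Finite := by
  apply Set.Finite.subset W.finite_toSet
  intro v hv
  by_contra hvW
  have hvW' : v ∉ W := fun hm => hvW (Finset.mem_coe.2 hm)
  rw [Set.mem_setOf_eq, restr, if_neg hvW'] at hv
  simp at hv

lemma rstep_mono {ρ ρ' : V → Option (Multiset V)}
    (h : ∀ v R, ρ' v = some R → ρ v = some R) {x y : Multiset V}
    (hs : RStep ρ' x y) : RStep ρ x y := by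
  obtain ⟨v, R, m, hv, hx, hy⟩ := hs
  exact ⟨v, R, m, h v R hv, hx, hy⟩

lemma rt_mono {ρ ρ' : V → Option (Multiset V)}
    (h : ∀ v R, ρ' v = some R → ρ v = some R) {x y : Multiset V}
    (hs : RT ρ' x y) : RT ρ x y := by
  induction hs with
  | refl => exact Relation.ReflTransGen.refl
  | tail _ hstep ih => exact ih.tail (rstep_mono h hstep)

lemma restr_mono {ρ : V → Option (Multiset V)} {W W' : Finset V} (h : W ⊆ W') :
    ∀ v R, restr ρ W v = some R → restr ρ W' v = some R := by
  intro v R hv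
  by_cases hm : v ∈ W
  · simp only [restr, if_pos hm] at hv
    simp [restr, if_pos (h hm), hv]
  · simp [restr, hm] at hv

lemma restr_le (ρ : V → Option (Multiset V)) (W : Finset V) :
    ∀ v R, restr ρ W v = some R → ρ v = some R := by
  intro v R hv
  by_cases hm : v ∈ W
  · simpa [restr, hm] using hv
  · simp [restr, hm] at hv

lemma rt_exists_restr {ρ : V → Option (Multiset V)} {x y : Multiset V}
    (h : RT ρ x y) : ∃ W : Finset V, RT (restr ρ W) x y := by
  classical
  induction h with
  | refl => exact ⟨∅, Relation.ReflTransGen.refl⟩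
  | tail _ hstep ih =>
    obtain ⟨W, hW⟩ := ih
    obtain ⟨v, R, m, hv, hx, hy⟩ := hstep
    refine ⟨insert v W, ?_⟩
    refine (rt_mono (restr_mono (Finset.subset_insert v W)) hW).tail ?_
    exact ⟨v, R, m, by simp [restr, hv], hx, hy⟩

/-! ### The graph monoid as a rewriting system -/

open scoped Classical in
noncomputable def rhoQ (Q : RowFiniteQuiver) : Q.V → Option (Multiset Q.V) :=
  fun v => if _ : ∃ e : Q.E, Q.s e = v then some ((Q.rowFinite v).toFinset.val.map Q.r)
    else none

lemma graphCon_iff (Q : RowFiniteQuiver) (x y : Multiset Q.V) :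
    addConGen (graphRel Q) x y ↔ Relation.Join (RT (rhoQ Q)) x y := by
  constructor
  · intro h
    refine AddCon.le_def.1 (AddCon.addConGen_le (c := JoinCon (rhoQ Q)) |>.2 ?_) h
    rintro x y ⟨v, hreg, rfl, rfl⟩
    apply joinCon_of_rt
    refine Relation.ReflTransGen.single
      ⟨v, (Q.rowFinite v).toFinset.val.map Q.r, 0, ?_, ?_, ?_⟩
    · rw [rhoQ, dif_pos hreg]
    · rfl
    · rw [zero_add]
  · intro h
    have hrt : ∀ a b : Multiset Q.V, RT (rhoQ Q) a b → addConGen (graphRel Q) a b := by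
      intro a b hab
      induction hab with
      | refl => exact (addConGen (graphRel Q)).refl _
      | tail _ hstep ih =>
        refine (addConGen (graphRel Q)).trans ih ?_
        obtain ⟨v, R, m, hv, rfl, rfl⟩ := hstep
        have hreg : ∃ e : Q.E, Q.s e = v := by
          by_contra hc
          simp [rhoQ, dif_neg hc] at hv
        have hR : R = (Q.rowFinite v).toFinset.val.map Q.r := by
          rw [rhoQ, dif_pos hreg] at hv
          exact (Option.some_inj.1 hv).symm
        have base : addConGen (graphRel Q) {v} R :=
          AddConGen.Rel.of _ _ ⟨v, hreg, rfl, hR⟩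
        have : addConGen (graphRel Q) ({v} + m) (R + m) :=
          (addConGen (graphRel Q)).add base ((addConGen (graphRel Q)).refl m)
        rwa [Multiset.singleton_add, add_comm R m] at this
    obtain ⟨c, h1, h2⟩ := h
    exact (addConGen (graphRel Q)).trans (hrt _ _ h1)
      ((addConGen (graphRel Q)).symm (hrt _ _ h2))

end GraphSep

/-- For every row-finite quiver, the graph monoid is separative. -/
theorem statement5 (Q : RowFiniteQuiver) :
    IsSeparative (GraphMonoid Q) := by
  classical
  intro A B h1 h2
  induction A using AddCon.induction_on with | H a =>
  induction B using AddCon.induction_on with | H b =>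
  rw [← AddCon.coe_add, ← AddCon.coe_add, AddCon.eq] at h1 h2
  obtain ⟨c1, h11, h12⟩ := (GraphSep.graphCon_iff Q _ _).1 h1
  obtain ⟨c2, h21, h22⟩ := (GraphSep.graphCon_iff Q _ _).1 h2
  obtain ⟨W1, hW1⟩ := GraphSep.rt_exists_restr h11
  obtain ⟨W2, hW2⟩ := GraphSep.rt_exists_restr h12
  obtain ⟨W3, hW3⟩ := GraphSep.rt_exists_restr h21
  obtain ⟨W4, hW4⟩ := GraphSep.rt_exists_restr h22
  set W : Finset Q.V := W1 ∪ W2 ∪ W3 ∪ W4 with hW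
  set ρ' := GraphSep.restr (GraphSep.rhoQ Q) W with hρ'
  have sub1 : W1 ⊆ W := by intro v hv; simp [hW, hv]
  have sub2 : W2 ⊆ W := by intro v hv; simp [hW, hv]
  have sub3 : W3 ⊆ W := by intro v hv; simp [hW, hv]
  have sub4 : W4 ⊆ W := by intro v hv; simp [hW, hv]
  have hsep : IsSeparative (GraphSep.JoinCon ρ').Quotient :=
    GraphSep.separative_of_pg GraphSep.refinement_joinCon
      (GraphSep.pg_joinCon (GraphSep.restr_dom _ _))
  have e1 : ((a + a : Multiset Q.V) : (GraphSep.JoinCon ρ').Quotient) = ↑(a + b) :=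
    (AddCon.eq _).2 ⟨c1, GraphSep.rt_mono (GraphSep.restr_mono sub1) hW1,
      GraphSep.rt_mono (GraphSep.restr_mono sub2) hW2⟩
  have e2 : ((b + b : Multiset Q.V) : (GraphSep.JoinCon ρ').Quotient) = ↑(a + b) :=
    (AddCon.eq _).2 ⟨c2, GraphSep.rt_mono (GraphSep.restr_mono sub3) hW3,
      GraphSep.rt_mono (GraphSep.restr_mono sub4) hW4⟩
  have hab : ((a : Multiset Q.V) : (GraphSep.JoinCon ρ').Quotient) = ↑b := by
    apply hsep
    · rw [← AddCon.coe_add, ← AddCon.coe_add]; exact e1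
    · rw [← AddCon.coe_add, ← AddCon.coe_add]; exact e2
  rw [AddCon.eq] at hab
  obtain ⟨c, hc1, hc2⟩ := hab
  rw [AddCon.eq]
  exact (GraphSep.graphCon_iff Q a b).2
    ⟨c, GraphSep.rt_mono (GraphSep.restr_le _ _) hc1,
      GraphSep.rt_mono (GraphSep.restr_le _ _) hc2⟩
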